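/- Every element a of the F_2-algebra A_0 can be written uniquely as a = a_0 · V_0^j where j ≥ 0 and a_0 is a monomial in the generators U_i, s_i (or an idempotent) containing no factor of V_0, and the Maslov grading satisfies m(a) = j(2N − 2). -/

import Mathlib

/-- The ground ring 𝔽₂[V₀], realized as the polynomial ring over ℤ/2. -/
abbrev GroundRing := Polynomial (ZMod 2)

/-- Generators of the associative algebra `A₀`: idempotents `I i`, and elements
`U i`, `s i`, for `i` ranging over `Fin N` (indices are taken mod `N`). -/
inductive AGen (N : ℕ) : Type
  | I : Fin N → AGen N
  | U : Fin N → AGen N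
  | s : Fin N → AGen N
deriving DecidableEq

variable (N : ℕ) [NeZero N]

open FreeAlgebra in
/-- The defining relations of `A₀` from the paper:
`I_i I_j = δ_{ij} I_i`; `I_j U_i = U_i I_j = δ_{ij} U_i`; `I_j s_i = δ_{ij} s_i`;
`s_i I_j = s_i` iff `j = i+1 (mod N)`; `U_i U_j = 0` for `i ≠ j`;
`U_i s_j = s_j U_i = 0`; `s_i s_j = 0` unless `j = i+1 (mod N)`. -/
inductive ARel : FreeAlgebra GroundRing (AGen N) → FreeAlgebra GroundRing (AGen N) → Prop
  | II (i j : Fin N) : ARel (ι GroundRing (AGen.I i) * ι GroundRing (AGen.I j))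
      (if i = j then ι GroundRing (AGen.I i) else 0)
  | IU (i j : Fin N) : ARel (ι GroundRing (AGen.I j) * ι GroundRing (AGen.U i))
      (if i = j then ι GroundRing (AGen.U i) else 0)
  | UI (i j : Fin N) : ARel (ι GroundRing (AGen.U i) * ι GroundRing (AGen.I j))
      (if i = j then ι GroundRing (AGen.U i) else 0)
  | Is (i j : Fin N) : ARel (ι GroundRing (AGen.I j) * ι GroundRing (AGen.s i))
      (if j = i then ι GroundRing (AGen.s i) else 0)
  | sI (i j : Fin N) : ARel (ι GroundRing (AGen.s i) * ι GroundRing (AGen.I j))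
      (if j = i + 1 then ι GroundRing (AGen.s i) else 0)
  | UU (i j : Fin N) : i ≠ j → ARel (ι GroundRing (AGen.U i) * ι GroundRing (AGen.U j)) 0
  | Us (i j : Fin N) : ARel (ι GroundRing (AGen.U i) * ι GroundRing (AGen.s j)) 0
  | sU (i j : Fin N) : ARel (ι GroundRing (AGen.s j) * ι GroundRing (AGen.U i)) 0
  | ss (i j : Fin N) : j ≠ i + 1 → ARel (ι GroundRing (AGen.s i) * ι GroundRing (AGen.s j)) 0

/-- The associative algebra `A₀`, presented by the above generators and relations. -/
abbrev A0 := RingQuot (ARel N)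

/-- The idempotent generator `I i` of `A₀`. -/
noncomputable def aI (i : Fin N) : A0 N :=
  RingQuot.mkAlgHom GroundRing (ARel N) (FreeAlgebra.ι GroundRing (AGen.I i))

/-- The generator `U i` of `A₀`. -/
noncomputable def aU (i : Fin N) : A0 N :=
  RingQuot.mkAlgHom GroundRing (ARel N) (FreeAlgebra.ι GroundRing (AGen.U i))

/-- The generator `s i` of `A₀`. -/
noncomputable def aS (i : Fin N) : A0 N :=
  RingQuot.mkAlgHom GroundRing (ARel N) (FreeAlgebra.ι GroundRing (AGen.s i))

open Fin.NatCast in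
/-- `s_{ii} = s_i s_{i+1} ⋯ s_{i-1}`, the full cyclic product of the `N` generators
`s_j` starting at index `i` (indices mod `N`). -/
noncomputable def scyc (i : Fin N) : A0 N :=
  ((List.range N).map (fun k => aS N (i + (k : Fin N)))).prod

/-- The central element `V₀` of `A₀` (the polynomial variable of the ground ring). -/
noncomputable def V0elt : A0 N := algebraMap GroundRing (A0 N) Polynomial.X

/-- Letters for monomials of `A₀` over 𝔽₂[V₀]: the generators `I i`, `U i`, `s i`,
and the central variable `V₀`. -/
inductive AVGen (N : ℕ) : Type
  | I : Fin N → AVGen N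
  | U : Fin N → AVGen N
  | s : Fin N → AVGen N
  | V : AVGen N
deriving DecidableEq

/-- The image in `A₀` of a letter. -/
noncomputable def avToA0 : AVGen N → A0 N
  | AVGen.I i => aI N i
  | AVGen.U i => aU N i
  | AVGen.s i => aS N i
  | AVGen.V => V0elt N

/-- The product in `A₀` of a word in the letters. -/
noncomputable def prodAV (w : List (AVGen N)) : A0 N := (w.map (avToA0 N)).prod

/-- The Maslov grading of a monomial word: `m(V₀) = 2N − 2` and `m(I_i) = m(U_i) = m(s_i) = 0`,
extended additively over products. -/
def maslovW (w : List (AVGen N)) : ℤ := (2 * (N : ℤ) - 2) * (w.count AVGen.V)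


/-! ### Auxiliary development: a normal-form representation of `A₀` -/

/-- Normal forms of nonzero monomials in the generators (no `V₀` factor). -/
inductive NF (N : ℕ) : Type
  | one : NF N
  | idem : Fin N → NF N
  | upow : Fin N → ℕ → NF N      -- `U_i ^ (k+1)`
  | spath : Fin N → ℕ → NF N     -- `s_i s_{i+1} ⋯ s_{i+k}`
deriving DecidableEq

/-- The representation space: free `𝔽₂[V₀]`-module on normal forms. -/
abbrev MRep (N : ℕ) := NF N →₀ GroundRing

/-- Left action of a generator on a normal-form basis vector. -/
noncomputable def actGen : AGen N → NF N → MRep N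
  | AGen.I i, NF.one => Finsupp.single (NF.idem i) 1
  | AGen.I i, NF.idem j => if i = j then Finsupp.single (NF.idem j) 1 else 0
  | AGen.I i, NF.upow j k => if i = j then Finsupp.single (NF.upow j k) 1 else 0
  | AGen.I i, NF.spath j k => if i = j then Finsupp.single (NF.spath j k) 1 else 0
  | AGen.U i, NF.one => Finsupp.single (NF.upow i 0) 1
  | AGen.U i, NF.idem j => if i = j then Finsupp.single (NF.upow i 0) 1 else 0
  | AGen.U i, NF.upow j k => if i = j then Finsupp.single (NF.upow j (k+1)) 1 else 0
  | AGen.U _, NF.spath _ _ => 0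
  | AGen.s i, NF.one => Finsupp.single (NF.spath i 0) 1
  | AGen.s i, NF.idem j => if j = i + 1 then Finsupp.single (NF.spath i 0) 1 else 0
  | AGen.s _, NF.upow _ _ => 0
  | AGen.s i, NF.spath j k => if j = i + 1 then Finsupp.single (NF.spath i (k+1)) 1 else 0

/-- The linear endomorphism given by a generator. -/
noncomputable def Lgen (g : AGen N) : Module.End GroundRing (MRep N) :=
  Finsupp.linearCombination GroundRing (actGen N g)

lemma Lgen_single (g : AGen N) (b : NF N) (c : GroundRing) :
    Lgen N g (Finsupp.single b c) = c • actGen N g b :=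
  Finsupp.linearCombination_single ..

/-- The representation on the free algebra. -/
noncomputable def phiFree : FreeAlgebra GroundRing (AGen N) →ₐ[GroundRing] Module.End GroundRing (MRep N) :=
  FreeAlgebra.lift GroundRing (Lgen N)

set_option maxHeartbeats 1000000 in
lemma phiFree_rel : ∀ ⦃x y : FreeAlgebra GroundRing (AGen N)⦄, ARel N x y → phiFree N x = phiFree N y := by
  intro x y h
  induction h <;>
  · simp only [map_mul, map_zero, phiFree, FreeAlgebra.lift_ι_apply,
      apply_ite (FreeAlgebra.lift GroundRing (Lgen N))]
    refine Finsupp.lhom_ext fun b c => ?_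
    cases b <;>
      simp only [Module.End.mul_apply, LinearMap.zero_apply, Lgen_single, actGen, smul_ite,
        smul_zero, Finsupp.smul_single, smul_eq_mul, mul_one, map_zero] <;>
      split_ifs <;> simp_all [Lgen_single, actGen, Finsupp.smul_single] <;>
      (try split_ifs <;> simp_all [eq_comm]) <;> (intros; simp_all [eq_comm])

/-- The representation of `A₀`. -/
noncomputable def Phi : A0 N →ₐ[GroundRing] Module.End GroundRing (MRep N) :=
  RingQuot.liftAlgHom GroundRing ⟨phiFree N, phiFree_rel N⟩

lemma Phi_gen (g : AGen N) :
    Phi N (RingQuot.mkAlgHom GroundRing (ARel N) (FreeAlgebra.ι GroundRing g)) = Lgen N g := by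
  simp [Phi, RingQuot.liftAlgHom_mkAlgHom_apply, phiFree]

/-! ### Multiplication lemmas in `A₀` -/

lemma aI_mul_aI (i j : Fin N) : aI N i * aI N j = if i = j then aI N i else 0 := by
  have h := RingQuot.mkAlgHom_rel GroundRing (ARel.II (N := N) i j)
  simpa [aI, map_mul, apply_ite (RingQuot.mkAlgHom GroundRing (ARel N))] using h

lemma aI_mul_aU (i j : Fin N) : aI N i * aU N j = if j = i then aU N j else 0 := by
  have h := RingQuot.mkAlgHom_rel GroundRing (ARel.IU (N := N) j i)
  simpa [aI, aU, map_mul, apply_ite (RingQuot.mkAlgHom GroundRing (ARel N))] using h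

lemma aU_mul_aI (i j : Fin N) : aU N i * aI N j = if i = j then aU N i else 0 := by
  have h := RingQuot.mkAlgHom_rel GroundRing (ARel.UI (N := N) i j)
  simpa [aI, aU, map_mul, apply_ite (RingQuot.mkAlgHom GroundRing (ARel N))] using h

lemma aI_mul_aS (i j : Fin N) : aI N i * aS N j = if i = j then aS N j else 0 := by
  have h := RingQuot.mkAlgHom_rel GroundRing (ARel.Is (N := N) j i)
  simpa [aI, aS, map_mul, apply_ite (RingQuot.mkAlgHom GroundRing (ARel N))] using h

lemma aS_mul_aI (i j : Fin N) : aS N i * aI N j = if j = i + 1 then aS N i else 0 := by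
  have h := RingQuot.mkAlgHom_rel GroundRing (ARel.sI (N := N) i j)
  simpa [aI, aS, map_mul, apply_ite (RingQuot.mkAlgHom GroundRing (ARel N))] using h

lemma aU_mul_aU {i j : Fin N} (h : i ≠ j) : aU N i * aU N j = 0 := by
  have h2 := RingQuot.mkAlgHom_rel GroundRing (ARel.UU (N := N) i j h)
  simpa [aU, map_mul] using h2

lemma aU_mul_aS (i j : Fin N) : aU N i * aS N j = 0 := by
  have h2 := RingQuot.mkAlgHom_rel GroundRing (ARel.Us (N := N) i j)
  simpa [aU, aS, map_mul] using h2

lemma aS_mul_aU (i j : Fin N) : aS N i * aU N j = 0 := by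
  have h2 := RingQuot.mkAlgHom_rel GroundRing (ARel.sU (N := N) j i)
  simpa [aU, aS, map_mul] using h2

lemma aS_mul_aS {i j : Fin N} (h : j ≠ i + 1) : aS N i * aS N j = 0 := by
  have h2 := RingQuot.mkAlgHom_rel GroundRing (ARel.ss (N := N) i j h)
  simpa [aS, map_mul] using h2

/-- The `A₀` element `s_j s_{j+1} ⋯ s_{j+k}` (as a head-recursive product). -/
noncomputable def spathA0 : ℕ → Fin N → A0 N
  | 0, i => aS N i
  | k+1, i => aS N i * spathA0 k (i+1)

lemma aI_mul_spath (i j : Fin N) (k : ℕ) :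
    aI N i * spathA0 N k j = if i = j then spathA0 N k j else 0 := by
  cases k <;> simp [spathA0, ← mul_assoc, aI_mul_aS, ite_mul]

lemma aU_mul_spath (i j : Fin N) (k : ℕ) : aU N i * spathA0 N k j = 0 := by
  cases k <;> simp [spathA0, ← mul_assoc, aU_mul_aS]

lemma aS_mul_spath (i j : Fin N) (k : ℕ) :
    aS N i * spathA0 N k j = if j = i + 1 then spathA0 N (k+1) i else 0 := by
  split_ifs with h
  · subst h; rfl
  · cases k with
    | zero => exact aS_mul_aS N h
    | succ k => rw [spathA0, ← mul_assoc, aS_mul_aS N h, zero_mul]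

lemma aI_mul_upow (i j : Fin N) (k : ℕ) :
    aI N i * aU N j ^ (k+1) = if j = i then aU N j ^ (k+1) else 0 := by
  rw [pow_succ', ← mul_assoc, aI_mul_aU]
  split_ifs <;> simp [pow_succ']

lemma aU_mul_upow (i j : Fin N) (k : ℕ) :
    aU N i * aU N j ^ (k+1) = if i = j then aU N j ^ (k+2) else 0 := by
  split_ifs with h
  · subst h; rw [← pow_succ']
  · rw [pow_succ', ← mul_assoc, aU_mul_aU N h, zero_mul]

lemma aS_mul_upow (i j : Fin N) (k : ℕ) : aS N i * aU N j ^ (k+1) = 0 := by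
  rw [pow_succ', ← mul_assoc, aS_mul_aU, zero_mul]

/-! ### The section of the representation on the cyclic vector -/

/-- The `A₀` element corresponding to a normal form. -/
noncomputable def toNF : NF N → A0 N
  | NF.one => 1
  | NF.idem i => aI N i
  | NF.upow i k => aU N i ^ (k+1)
  | NF.spath i k => spathA0 N k i

noncomputable def toNFhat : MRep N →ₗ[GroundRing] A0 N :=
  Finsupp.linearCombination GroundRing (toNF N)

noncomputable def genA0 : AGen N → A0 N
  | AGen.I i => aI N i
  | AGen.U i => aU N i
  | AGen.s i => aS N i

lemma toNFhat_act (g : AGen N) (b : NF N) :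
    toNFhat N (actGen N g b) = genA0 N g * toNF N b := by
  cases g <;> cases b <;>
    simp only [actGen, toNF, genA0, toNFhat, apply_ite (Finsupp.linearCombination GroundRing (toNF N)),
      Finsupp.linearCombination_single, map_zero, one_smul, toNF, mul_one,
      aI_mul_aI, aI_mul_aU, aI_mul_aS, aU_mul_aI, aU_mul_aS, aS_mul_aI, aS_mul_aU,
      aI_mul_upow, aU_mul_upow, aS_mul_upow, aI_mul_spath, aU_mul_spath, aS_mul_spath] <;>
    (try split_ifs) <;> simp_all [toNF, eq_comm, spathA0, pow_one]

lemma toNFhat_single (b : NF N) (c : GroundRing) :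
    toNFhat N (Finsupp.single b c) = c • toNF N b :=
  Finsupp.linearCombination_single ..

lemma toNFhat_Lgen (g : AGen N) (v : MRep N) :
    toNFhat N (Lgen N g v) = genA0 N g * toNFhat N v := by
  have : toNFhat N ∘ₗ Lgen N g
      = LinearMap.mulLeft GroundRing (genA0 N g) ∘ₗ toNFhat N := by
    refine Finsupp.lhom_ext fun b c => ?_
    simp only [LinearMap.comp_apply, Lgen_single, map_smul, toNFhat_act,
      LinearMap.mulLeft_apply, toNFhat_single, mul_smul_comm]
  exact DFunLike.congr_fun this v

lemma Phi_intertwine (a : A0 N) (v : MRep N) :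
    toNFhat N (Phi N a v) = a * toNFhat N v := by
  obtain ⟨x, rfl⟩ := RingQuot.mkAlgHom_surjective GroundRing (ARel N) a
  revert v
  refine FreeAlgebra.induction GroundRing (AGen N)
    (motive := fun x => ∀ v, toNFhat N (Phi N (RingQuot.mkAlgHom GroundRing (ARel N) x) v)
      = RingQuot.mkAlgHom GroundRing (ARel N) x * toNFhat N v) ?_ ?_ ?_ ?_ x
  · intro r v
    simp [AlgHom.commutes, Module.algebraMap_end_apply, Algebra.smul_def]
  · intro g v
    rw [Phi_gen, toNFhat_Lgen]
    cases g <;> rfl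
  · intro a b ha hb v
    simp only [map_mul, Module.End.mul_apply, ha, hb, mul_assoc]
  · intro a b ha hb v
    simp only [map_add, LinearMap.add_apply, map_add, ha, hb, add_mul]

lemma Phi_inj {a b : A0 N}
    (h : Phi N a (Finsupp.single NF.one 1) = Phi N b (Finsupp.single NF.one 1)) : a = b := by
  have ha := Phi_intertwine N a (Finsupp.single NF.one 1)
  have hb := Phi_intertwine N b (Finsupp.single NF.one 1)
  rw [h] at ha
  have h1 : toNFhat N (Finsupp.single NF.one 1) = 1 := by
    simp [toNFhat_single, toNF]
  rw [h1, mul_one] at ha hb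
  exact ha.symm.trans hb

lemma V0_pow_cancel {j : ℕ} {a b : A0 N} (h : V0elt N ^ j * a = V0elt N ^ j * b) : a = b := by
  apply Phi_inj
  have hV : Phi N (V0elt N) = algebraMap GroundRing _ Polynomial.X := by
    simp [V0elt, AlgHom.commutes]
  have h2 : Phi N (V0elt N ^ j * a) (Finsupp.single NF.one 1)
      = Phi N (V0elt N ^ j * b) (Finsupp.single NF.one 1) := by rw [h]
  simp only [map_mul, map_pow, hV] at h2
  rw [← map_pow] at h2
  simp only [Module.End.mul_apply, Module.algebraMap_end_apply] at h2
  refine Finsupp.ext fun b' => ?_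
  have h3 := congrArg (fun f : MRep N => f b') h2
  simp only [Finsupp.smul_apply, smul_eq_mul] at h3
  exact mul_left_cancel₀ (pow_ne_zero j Polynomial.X_ne_zero) h3

lemma prod_decomp (l : List (AVGen N)) :
    prodAV N l = V0elt N ^ (l.count AVGen.V) * prodAV N (l.filter (· ≠ AVGen.V)) := by
  induction l with
  | nil => simp [prodAV]
  | cons a l ih =>
    have hcons : prodAV N (a :: l) = avToA0 N a * prodAV N l := by
      simp [prodAV]
    by_cases ha : a = AVGen.V
    · subst ha
      rw [hcons, ih]
      have hc : (AVGen.V :: l).count AVGen.V = l.count AVGen.V + 1 := by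
        simp [List.count_cons]
      have hf : (AVGen.V :: l).filter (· ≠ AVGen.V) = l.filter (· ≠ AVGen.V) := by
        simp [List.filter_cons]
      rw [hc, hf, ← mul_assoc, avToA0]
      rw [show V0elt N * V0elt N ^ l.count AVGen.V = V0elt N ^ (l.count AVGen.V + 1) from
        (pow_succ' _ _).symm]
    · rw [hcons, ih]
      have hc : (a :: l).count AVGen.V = l.count AVGen.V := by
        simp [List.count_cons, ha]
      have hf : (a :: l).filter (· ≠ AVGen.V) = a :: l.filter (· ≠ AVGen.V) := by
        simp [List.filter_cons, ha]
      have hcomm : avToA0 N a * V0elt N ^ l.count AVGen.V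
          = V0elt N ^ l.count AVGen.V * avToA0 N a := by
        have : V0elt N ^ l.count AVGen.V
            = algebraMap GroundRing (A0 N) (Polynomial.X ^ l.count AVGen.V) := by
          simp [V0elt, map_pow]
        rw [this, ← Algebra.commutes]
      rw [hc, hf]
      have : prodAV N (a :: l.filter (· ≠ AVGen.V))
          = avToA0 N a * prodAV N (l.filter (· ≠ AVGen.V)) := by simp [prodAV]
      rw [this, ← mul_assoc, hcomm, mul_assoc]
/-- Every (monomial) element `a` of the 𝔽₂-algebra `A₀` can be written
uniquely as `a = a₀ · V₀^j` with `j ≥ 0` and `a₀` a monomial in the generators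
(or an idempotent) containing no factor of `V₀`; moreover the Maslov grading
satisfies `m(a) = j(2N − 2)`. -/
theorem V0_factorization_unique (hN : 2 < N) (l : List (AVGen N))
    (hl : prodAV N l ≠ 0) :
    ∃! p : ℕ × A0 N,
      (∃ w : List (AVGen N), AVGen.V ∉ w ∧ p.2 = prodAV N w) ∧
      prodAV N l = (V0elt N) ^ p.1 * p.2 ∧
      maslovW N l = p.1 * (2 * (N : ℤ) - 2) := by
  classical
  set j := l.count AVGen.V with hj
  set w := l.filter (· ≠ AVGen.V) with hw
  have hwV : AVGen.V ∉ w := by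
    intro hmem
    have := (List.mem_filter.mp hmem).2
    simp at this
  have hdec : prodAV N l = V0elt N ^ j * prodAV N w := prod_decomp N l
  have hmas : maslovW N l = (j : ℤ) * (2 * (N : ℤ) - 2) := by
    simp [maslovW, hj, mul_comm]
  refine ⟨⟨j, prodAV N w⟩, ⟨⟨w, hwV, rfl⟩, hdec, hmas⟩, ?_⟩
  rintro ⟨j', a'⟩ ⟨⟨w', hw', ha'⟩, heq', hm'⟩
  dsimp only at ha' heq' hm' ⊢
  have h2N : (2 * (N : ℤ) - 2) ≠ 0 := by
    have : (3 : ℤ) ≤ (N : ℤ) := by exact_mod_cast hN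
    omega
  have hjj : j' = j := by
    have : (j' : ℤ) * (2 * (N : ℤ) - 2) = (j : ℤ) * (2 * (N : ℤ) - 2) := by
      rw [← hm', hmas]
    exact_mod_cast mul_right_cancel₀ h2N this
  have hx : V0elt N ^ j * a' = V0elt N ^ j * prodAV N w := by
    rw [← hjj, ← heq', hdec, ← hjj]
  exact Prod.ext hjj (V0_pow_cancel N hx)
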